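/- For every integer M ≥ 2 and every real α > 1, S_M(α) := (2^{M+1} - 2^{M-1} - 2)·α - (3·2^{M-1} - 3M) + (2^{M-1} - 1)/(2^{M-2}·(α-1)) satisfies S_M(α) > M·α. -/

import Mathlib

/-- The group-privacy amplification factor
`S_M(α) = (2^{M+1} - 2^{M-1} - 2)α - (3·2^{M-1} - 3M) + (2^{M-1} - 1)/(2^{M-2}(α-1))`
exceeds `M·α` for every integer `M ≥ 2` and real `α > 1`. -/
theorem S_factor_gt (M : ℕ) (hM : 2 ≤ M) (α : ℝ) (hα : 1 < α) :
    ((2 : ℝ) ^ (M + 1) - 2 ^ (M - 1) - 2) * α - (3 * 2 ^ (M - 1) - 3 * M)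
        + ((2 : ℝ) ^ (M - 1) - 1) / (2 ^ (M - 2) * (α - 1))
      > (M : ℝ) * α := by
  obtain ⟨m, rfl⟩ := Nat.exists_eq_add_of_le hM
  have h1 : 2 + m + 1 = m + 3 := by omega
  have h2 : 2 + m - 1 = m + 1 := by omega
  have h3 : 2 + m - 2 = m := by omega
  rw [h1, h2, h3]
  have hP : (1 : ℝ) ≤ 2 ^ m := one_le_pow₀ (by norm_num)
  have hPm : (m : ℝ) + 1 ≤ 2 ^ m := by
    exact_mod_cast Nat.lt_two_pow_self (n := m)
  have hα1 : (0 : ℝ) < α - 1 := by linarith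
  have hden : (0 : ℝ) < 2 ^ m * (α - 1) := by positivity
  have hdiv : (0 : ℝ) < ((2 : ℝ) ^ (m + 1) - 1) / (2 ^ m * (α - 1)) := by
    apply div_pos _ hden
    have : (1 : ℝ) ≤ 2 ^ (m + 1) / 2 := by
      rw [pow_succ]; linarith
    nlinarith
  have hcast : ((2 + m : ℕ) : ℝ) = (m : ℝ) + 2 := by push_cast; ring
  rw [hcast]
  have hpow1 : (2 : ℝ) ^ (m + 3) = 8 * 2 ^ m := by ring
  have hpow2 : (2 : ℝ) ^ (m + 1) = 2 * 2 ^ m := by ring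
  rw [hpow1, hpow2]; rw [hpow2] at hdiv
  nlinarith [mul_pos hα1 (show (0:ℝ) < 6 * 2 ^ m - (m + 4) by nlinarith), hdiv]
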